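/- arXiv:1301.5738 — 7 statements merged into one kernel-verified Lean document; each statement's English description precedes it below -/
import Mathlib

section
/- If a point x in the extended strategy space lies in the interior (relative to S) of the best response region R_i, then x does not lie in R_j for any j ≠ i; equivalently, distinct best response regions have disjoint relative interiors, provided the payoff functions x ↦ (Mx)_i are pairwise distinct affine functions on S. -/
/-- a point in the relative interior (w.r.t. the extended strategy
space `S = {x | ∑ x = 1}`) of a best response region `R i` lies in no other best
response region, provided the payoff functionals are pairwise distinct on `S`. -/
theorem stmt_2 (k : ℕ) (hk : 1 ≤ k) (M : Matrix (Fin k) (Fin k) ℝ)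
    (hdistinct : ∀ i j : Fin k, i ≠ j →
      ∃ x : Fin k → ℝ, (∑ m, x m) = 1 ∧ M.mulVec x i ≠ M.mulVec x j)
    (i j : Fin k) (hij : i ≠ j) (x : Fin k → ℝ)
    (hxS : (∑ m, x m) = 1)
    (hxRi : ∀ m : Fin k, M.mulVec x m ≤ M.mulVec x i)
    (hrelint : ∃ ε > (0 : ℝ), ∀ y : Fin k → ℝ, (∑ m, y m) = 1 → dist y x < ε →
      ∀ m : Fin k, M.mulVec y m ≤ M.mulVec y i) :
    ¬ (∀ m : Fin k, M.mulVec x m ≤ M.mulVec x j) := by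
  intro hxRj
  obtain ⟨ε, hε, hball⟩ := hrelint
  obtain ⟨z, hzS, hzne⟩ := hdistinct i j hij
  have heq : M.mulVec x i = M.mulVec x j := le_antisymm (hxRj i) (hxRi j)
  set c : ℝ := M.mulVec z i - M.mulVec z j with hc
  have hc0 : c ≠ 0 := sub_ne_zero.mpr hzne
  have hc2 : 0 < c ^ 2 := by positivity
  have hd0 : (0:ℝ) < |c| * dist z x + 1 := by positivity
  set δ : ℝ := ε / (|c| * dist z x + 1) with hδ
  have hδ0 : 0 < δ := div_pos hε hd0
  set t : ℝ := -c * δ with ht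
  set y : Fin k → ℝ := x + t • (z - x) with hy
  have hyS : (∑ m, y m) = 1 := by
    have h1 : ∑ m, y m = (∑ m, x m) + t * ((∑ m, z m) - ∑ m, x m) := by
      simp only [hy, Pi.add_apply, Pi.smul_apply, Pi.sub_apply, smul_eq_mul,
        Finset.sum_add_distrib, Finset.mul_sum, mul_sub, Finset.sum_sub_distrib]
    rw [h1, hxS, hzS]; ring
  have hdist : dist y x < ε := by
    have h1 : dist y x = |t| * dist z x := by
      rw [dist_eq_norm, dist_eq_norm]
      have h2 : y - x = t • (z - x) := by rw [hy]; abel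
      rw [h2, norm_smul, Real.norm_eq_abs]
    have h3 : |t| = |c| * δ := by
      rw [ht, abs_mul, abs_neg, abs_of_pos hδ0]
    rw [h1, h3, hδ]
    rw [mul_div_assoc', div_mul_eq_mul_div, div_lt_iff₀ hd0]
    nlinarith [dist_nonneg (x := z) (y := x), abs_nonneg c]
  have hmv : ∀ m, M.mulVec y m = M.mulVec x m + t * (M.mulVec z m - M.mulVec x m) := by
    intro m
    simp only [Matrix.mulVec, dotProduct, hy, Pi.add_apply, Pi.smul_apply, Pi.sub_apply,
      smul_eq_mul, mul_add, Finset.sum_add_distrib, mul_sub, Finset.mul_sum,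
      Finset.sum_sub_distrib]
    congr 1
    congr 1 <;> exact Finset.sum_congr rfl fun n _ => by ring
  have hle := hball y hyS hdist j
  rw [hmv i, hmv j, heq] at hle
  have h1 : 0 ≤ t * c := by rw [hc]; nlinarith [hle]
  have h2 : t * c = -(c ^ 2 * δ) := by rw [ht]; ring
  nlinarith [mul_pos hc2 hδ0]
end

section
/- Let X, Y be disjoint finite sets of unordered pairs (allowing repeated elements, i.e. edges and self-loops) over a finite set S of vertices, viewed as a two-colored multigraph Gr(X,Y) with dark edges X and light edges Y. If there exist nonnegative weights λ : X → ℝ≥0 and μ : Y → ℝ≥0, not all zero, such that at every vertex v the total λ-weight of dark edges incident to v equals the total μ-weight of light edges incident to v (self-loops counted twice), then Gr(X,Y) contains an alternating closed walk: a closed walk in which consecutive edges alternate between X and Y (including at the return to the start). -/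
/-- An alternating closed walk in the two-coloured multigraph with dark edge set
`X` and light edge set `Y` (edges are size-2 multisets, so self-loops are
allowed): a closed walk of even length whose edges alternate between `X` and
`Y`, including at the return to the start. -/
def IsAltClosedWalk {S : Type*} [DecidableEq S] (X Y : Finset (Multiset S)) : Prop :=
  ∃ m : ℕ, 0 < m ∧ ∃ v : ℕ → S, v (2 * m) = v 0 ∧
    ∀ i < 2 * m, ({v i, v (i + 1)} : Multiset S) ∈ (if i % 2 = 0 then X else Y)

/-- if there are nonnegative, not-all-zero edge weights on the dark
and light edges that balance at every vertex (self-loops counted twice), then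
the multigraph contains an alternating closed walk. -/
theorem stmt_12 (S : Type*) [Fintype S] [DecidableEq S]
    (X Y : Finset (Multiset S)) (hXY : Disjoint X Y)
    (hcard : ∀ e ∈ X ∪ Y, Multiset.card e = 2)
    (lam mu : Multiset S → ℝ)
    (hlam : ∀ e ∈ X, 0 ≤ lam e) (hmu : ∀ e ∈ Y, 0 ≤ mu e)
    (hnz : (∃ e ∈ X, lam e ≠ 0) ∨ (∃ e ∈ Y, mu e ≠ 0))
    (hbal : ∀ v : S,
      (∑ e ∈ X, lam e * (e.count v : ℝ)) = ∑ e ∈ Y, mu e * (e.count v : ℝ)) :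
    IsAltClosedWalk X Y := by
  classical
  set P : S → Prop := fun v => ∃ e ∈ X, 0 < lam e ∧ v ∈ e with hPdef
  set Q : S → Prop := fun v => ∃ e ∈ Y, 0 < mu e ∧ v ∈ e with hQdef
  have hPpos : ∀ v, P v → 0 < ∑ e ∈ X, lam e * (e.count v : ℝ) := by
    rintro v ⟨e, he, hle, hve⟩
    refine Finset.sum_pos' (fun f hf => mul_nonneg (hlam f hf) (Nat.cast_nonneg _)) ?_
    exact ⟨e, he, mul_pos hle (by exact_mod_cast Multiset.count_pos.mpr hve)⟩
  have hQpos : ∀ v, Q v → 0 < ∑ e ∈ Y, mu e * (e.count v : ℝ) := by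
    rintro v ⟨e, he, hle, hve⟩
    refine Finset.sum_pos' (fun f hf => mul_nonneg (hmu f hf) (Nat.cast_nonneg _)) ?_
    exact ⟨e, he, mul_pos hle (by exact_mod_cast Multiset.count_pos.mpr hve)⟩
  have hposP : ∀ v, 0 < (∑ e ∈ X, lam e * (e.count v : ℝ)) → P v := by
    intro v hv
    obtain ⟨e, he, hne⟩ := Finset.exists_ne_zero_of_sum_ne_zero hv.ne'
    rcases mul_ne_zero_iff.mp hne with ⟨h1, h2⟩
    refine ⟨e, he, (hlam e he).lt_of_ne (Ne.symm h1), ?_⟩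
    exact Multiset.count_pos.mp (Nat.pos_of_ne_zero (by exact_mod_cast h2))
  have hposQ : ∀ v, 0 < (∑ e ∈ Y, mu e * (e.count v : ℝ)) → Q v := by
    intro v hv
    obtain ⟨e, he, hne⟩ := Finset.exists_ne_zero_of_sum_ne_zero hv.ne'
    rcases mul_ne_zero_iff.mp hne with ⟨h1, h2⟩
    refine ⟨e, he, (hmu e he).lt_of_ne (Ne.symm h1), ?_⟩
    exact Multiset.count_pos.mp (Nat.pos_of_ne_zero (by exact_mod_cast h2))
  have hPQ : ∀ v, P v → Q v := fun v hv => hposQ v (hbal v ▸ hPpos v hv)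
  have hQP : ∀ v, Q v → P v := fun v hv => hposP v ((hbal v).symm ▸ hQpos v hv)
  have hother : ∀ e ∈ X ∪ Y, ∀ v ∈ e, ∃ w, e = ({v, w} : Multiset S) := by
    intro e he v hv
    obtain ⟨a, b, rfl⟩ := Multiset.card_eq_two.mp (hcard e he)
    rcases Multiset.mem_cons.mp hv with h | h
    · exact ⟨b, by rw [h]⟩
    · rw [Multiset.mem_singleton] at h
      exact ⟨a, by rw [h, Multiset.pair_comm]⟩
  have hstep : ∀ v : S, ∃ w u, P v →
      (({v, w} : Multiset S) ∈ X ∧ ({w, u} : Multiset S) ∈ Y ∧ P u) := by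
    intro v
    by_cases hv : P v
    · obtain ⟨e, he, hle, hve⟩ := hv
      obtain ⟨w, rfl⟩ := hother e (Finset.mem_union_left _ he) v hve
      have hPw : P w := ⟨_, he, hle, by simp⟩
      obtain ⟨f, hf, hmf, hwf⟩ := hPQ w hPw
      obtain ⟨u, rfl⟩ := hother f (Finset.mem_union_right _ hf) w hwf
      have hQu : Q u := ⟨_, hf, hmf, by simp⟩
      exact ⟨w, u, fun _ => ⟨he, hf, hQP u hQu⟩⟩
    · exact ⟨v, v, fun h => absurd h hv⟩
  choose W U hWU using hstep
  have hv0 : ∃ v0, P v0 := by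
    rcases hnz with ⟨e, he, hne⟩ | ⟨e, he, hne⟩
    · have hpos : 0 < lam e := (hlam e he).lt_of_ne (Ne.symm hne)
      have hne0 : e ≠ 0 := by
        intro h; have := hcard e (Finset.mem_union_left _ he); rw [h] at this; simp at this
      obtain ⟨v, hv⟩ := Multiset.exists_mem_of_ne_zero hne0
      exact ⟨v, e, he, hpos, hv⟩
    · have hpos : 0 < mu e := (hmu e he).lt_of_ne (Ne.symm hne)
      have hne0 : e ≠ 0 := by
        intro h; have := hcard e (Finset.mem_union_right _ he); rw [h] at this; simp at this
      obtain ⟨v, hv⟩ := Multiset.exists_mem_of_ne_zero hne0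
      exact ⟨v, hQP v ⟨e, he, hpos, hv⟩⟩
  obtain ⟨v0, hv0⟩ := hv0
  let a : ℕ → S := fun n => Nat.rec v0 (fun _ x => U x) n
  have ha : ∀ n, a (n + 1) = U (a n) := fun n => rfl
  have hPa : ∀ n, P (a n) := by
    intro n
    induction n with
    | zero => exact hv0
    | succ n ih => rw [ha]; exact (hWU (a n) ih).2.2
  obtain ⟨x, y, hxy, haxy⟩ := Finite.exists_ne_map_eq_of_infinite a
  obtain ⟨i, j, hij, haij⟩ : ∃ i j, i < j ∧ a i = a j := by
    rcases lt_or_gt_of_ne hxy with h | h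
    exacts [⟨x, y, h, haxy⟩, ⟨y, x, h, haxy.symm⟩]
  refine ⟨j - i, Nat.sub_pos_of_lt hij,
    fun t => if t % 2 = 0 then a (i + t / 2) else W (a (i + t / 2)), ?_, ?_⟩
  · have h1 : 2 * (j - i) % 2 = 0 := by omega
    have h2 : 2 * (j - i) / 2 = j - i := by omega
    simp only [h1, h2, if_pos rfl, Nat.zero_div, Nat.zero_mod, Nat.add_zero]
    rw [Nat.add_sub_cancel' hij.le, ← haij]
  · intro t ht
    rcases Nat.even_or_odd t with he | ho
    · have ht0 : t % 2 = 0 := Nat.even_iff.mp he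
      have ht1 : (t + 1) % 2 ≠ 0 := by omega
      have ht2 : (t + 1) / 2 = t / 2 := by omega
      simp only [ht0, if_pos rfl, if_neg ht1, ht2]
      exact (hWU _ (hPa _)).1
    · have ht0 : t % 2 ≠ 0 := by rcases ho with ⟨k, rfl⟩; omega
      have ht1 : (t + 1) % 2 = 0 := by omega
      have ht2 : (t + 1) / 2 = t / 2 + 1 := by omega
      simp only [if_neg ht0, ht1, if_pos rfl, ht2, ← Nat.add_assoc, ha]
      exact (hWU _ (hPa _)).2.1
end

section
/- Let X, Y be disjoint finite sets of unordered pairs over a finite strategy set S = Fin k. If the two-colored multigraph Gr(X,Y) contains an alternating closed walk (consecutive edges alternating between X and Y, cyclically), then the convex hulls of the point sets {(e(a)+e(b))/2 : {a,b} ∈ X} and {(e(a)+e(b))/2 : {a,b} ∈ Y} in ℝ^k intersect. -/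
/-- The point of the simplex associated with an edge `{a, b}`:
`(e(a) + e(b)) / 2`. -/
noncomputable def edgePoint {k : ℕ} (e : Multiset (Fin k)) : Fin k → ℝ :=
  (2 : ℝ)⁻¹ • (e.map (fun s => Pi.single s (1 : ℝ))).sum

lemma sum_range_two_mul' {M : Type*} [AddCommMonoid M] (m : ℕ) (g : ℕ → M) :
    ∑ i ∈ Finset.range (2 * m), g i
      = ∑ j ∈ Finset.range m, (g (2 * j) + g (2 * j + 1)) := by
  induction m with
  | zero => simp
  | succ n ih =>
      have h2 : 2 * (n + 1) = 2 * n + 1 + 1 := by ring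
      rw [h2, Finset.sum_range_succ, Finset.sum_range_succ, Finset.sum_range_succ, ih, add_assoc]

/-- an alternating closed walk forces the convex hulls of the dark
and light edge-point sets to intersect. -/
theorem stmt_13 (k : ℕ) (X Y : Finset (Multiset (Fin k))) (hXY : Disjoint X Y)
    (hcard : ∀ e ∈ X ∪ Y, Multiset.card e = 2)
    (hwalk : IsAltClosedWalk X Y) :
    ∃ p : Fin k → ℝ, p ∈ convexHull ℝ (edgePoint '' (X : Set (Multiset (Fin k)))) ∧
      p ∈ convexHull ℝ (edgePoint '' (Y : Set (Multiset (Fin k)))) := by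
  obtain ⟨m, hm, v, hv0, hmem⟩ := hwalk
  set f : ℕ → (Fin k → ℝ) := fun i => Pi.single (v i) (1 : ℝ) with hf
  -- membership of the edges
  have hXmem : ∀ j < m, ({v (2 * j), v (2 * j + 1)} : Multiset (Fin k)) ∈ X := by
    intro j hj
    have := hmem (2 * j) (by omega)
    simpa [Nat.mul_mod_right] using this
  have hYmem : ∀ j < m, ({v (2 * j + 1), v (2 * j + 2)} : Multiset (Fin k)) ∈ Y := by
    intro j hj
    have := hmem (2 * j + 1) (by omega)
    have hodd : (2 * j + 1) % 2 = 1 := by omega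
    rw [hodd] at this
    simpa [show 2 * j + 1 + 1 = 2 * j + 2 by ring] using this
  -- key sum equality
  have hep : ∀ a b : Fin k, edgePoint ({a, b} : Multiset (Fin k))
      = (2 : ℝ)⁻¹ • (Pi.single a (1 : ℝ) + Pi.single b (1 : ℝ)) := by
    intro a b
    simp [edgePoint]
  have key : ∑ j ∈ Finset.range m, edgePoint ({v (2 * j), v (2 * j + 1)} : Multiset (Fin k))
      = ∑ j ∈ Finset.range m, edgePoint ({v (2 * j + 1), v (2 * j + 2)} : Multiset (Fin k)) := by
    have h1 : ∑ j ∈ Finset.range m, (f (2 * j) + f (2 * j + 1))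
        = ∑ i ∈ Finset.range (2 * m), f i := (sum_range_two_mul' m f).symm
    have h2 : ∑ j ∈ Finset.range m, (f (2 * j + 1) + f (2 * j + 2))
        = ∑ i ∈ Finset.range (2 * m), f (i + 1) := by
      rw [sum_range_two_mul' m (fun i => f (i + 1))]
    have h3 : ∑ i ∈ Finset.range (2 * m), f (i + 1)
        = ∑ i ∈ Finset.range (2 * m), f i := by
      have ha : ∑ i ∈ Finset.range (2 * m + 1), f i
          = ∑ i ∈ Finset.range (2 * m), f (i + 1) + f 0 := Finset.sum_range_succ' f (2 * m)
      have hb : ∑ i ∈ Finset.range (2 * m + 1), f i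
          = ∑ i ∈ Finset.range (2 * m), f i + f (2 * m) := Finset.sum_range_succ f (2 * m)
      have hc : f (2 * m) = f 0 := by simp [hf, hv0]
      have := ha.symm.trans hb
      rw [hc] at this
      exact add_right_cancel this
    simp only [hep, ← Finset.smul_sum]
    rw [show (∑ j ∈ Finset.range m, (Pi.single (v (2*j)) (1:ℝ) + Pi.single (v (2*j+1)) (1:ℝ)))
        = ∑ j ∈ Finset.range m, (f (2 * j) + f (2 * j + 1)) from rfl,
      show (∑ j ∈ Finset.range m, (Pi.single (v (2*j+1)) (1:ℝ) + Pi.single (v (2*j+2)) (1:ℝ)))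
        = ∑ j ∈ Finset.range m, (f (2 * j + 1) + f (2 * j + 2)) from rfl,
      h1, h2, h3]
  -- center of mass
  set w : ℕ → ℝ := fun _ => 1 with hw
  have hw0 : ∀ j ∈ Finset.range m, 0 ≤ w j := fun _ _ => zero_le_one
  have hws : 0 < ∑ j ∈ Finset.range m, w j := by
    simp [hw]
    exact_mod_cast hm
  refine ⟨(Finset.range m).centerMass w
      (fun j => edgePoint ({v (2 * j), v (2 * j + 1)} : Multiset (Fin k))), ?_, ?_⟩
  · exact Finset.centerMass_mem_convexHull _ hw0 hws fun j hj =>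
      Set.mem_image_of_mem edgePoint (by exact_mod_cast hXmem j (Finset.mem_range.mp hj))
  · have heq : (Finset.range m).centerMass w
        (fun j => edgePoint ({v (2 * j), v (2 * j + 1)} : Multiset (Fin k)))
        = (Finset.range m).centerMass w
          (fun j => edgePoint ({v (2 * j + 1), v (2 * j + 2)} : Multiset (Fin k))) := by
      simp only [Finset.centerMass, hw, one_smul]
      rw [key]
    rw [heq]
    exact Finset.centerMass_mem_convexHull _ hw0 hws fun j hj =>
      Set.mem_image_of_mem edgePoint (by exact_mod_cast hYmem j (Finset.mem_range.mp hj))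
end

section
/- Let X, Y be disjoint sets of unordered pairs over Fin k. The pair (X, Y) is (k,2)-unacceptable—i.e., the convex hulls of {(e(a)+e(b))/2 : {a,b} ∈ X} and {(e(a)+e(b))/2 : {a,b} ∈ Y} intersect—if and only if the two-colored multigraph Gr(X,Y) contains an alternating closed walk. -/
lemma altWalk_edgePoint_pair {k : ℕ} (a b : Fin k) :
    edgePoint ({a, b} : Multiset (Fin k))
      = (2 : ℝ)⁻¹ • (Pi.single a (1:ℝ) + Pi.single b 1) := by
  simp [edgePoint, Multiset.insert_eq_cons]

lemma altWalk_count_apply {k : ℕ} (e : Multiset (Fin k)) (s : Fin k) :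
    ((e.map (fun a => Pi.single a (1 : ℝ))).sum) s = e.count s := by
  induction e using Multiset.induction with
  | empty => simp
  | cons a e ih =>
      simp only [Multiset.map_cons, Multiset.sum_cons, Pi.add_apply, ih, Multiset.count_cons]
      rcases eq_or_ne s a with rfl | h
      · simp [add_comm]
      · simp [Pi.single_apply, h, Ne.symm h]

open Finset in
lemma altWalk_exists_weights {k : ℕ} (Z : Finset (Multiset (Fin k))) (p : Fin k → ℝ)
    (hp : p ∈ convexHull ℝ (edgePoint '' (Z : Set (Multiset (Fin k))))) :
    ∃ lam : Multiset (Fin k) → ℝ, (∀ e, 0 ≤ lam e) ∧ ∑ e ∈ Z, lam e = 1 ∧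
      ∑ e ∈ Z, lam e • edgePoint e = p := by
  classical
  rw [_root_.convexHull_eq] at hp
  obtain ⟨ι, t, w, z, hw0, hw1, hz, hcm⟩ := hp
  have hz' : ∀ i, ∃ e, i ∈ t → e ∈ Z ∧ edgePoint e = z i := by
    intro i
    by_cases hi : i ∈ t
    · obtain ⟨e, he, hee⟩ := hz i hi
      exact ⟨e, fun _ => ⟨he, hee⟩⟩
    · exact ⟨0, fun h => absurd h hi⟩
  choose g hg using hz'
  refine ⟨fun e => ∑ i ∈ t.filter (fun i => g i = e), w i, ?_, ?_, ?_⟩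
  · intro e; exact Finset.sum_nonneg fun i hi => hw0 i (mem_filter.mp hi).1
  · rw [Finset.sum_fiberwise_of_maps_to (fun i hi => (hg i hi).1)]; exact hw1
  · rw [← hcm, Finset.centerMass, hw1, inv_one, one_smul]
    rw [← Finset.sum_fiberwise_of_maps_to (fun i hi => (hg i hi).1) (fun i => w i • z i)]
    refine Finset.sum_congr rfl fun e _ => ?_
    rw [Finset.sum_smul]
    refine Finset.sum_congr rfl fun i hi => ?_
    obtain ⟨hit, hie⟩ := mem_filter.mp hi
    rw [← (hg i hit).2, hie]

lemma altWalk_active {k : ℕ} (Z : Finset (Multiset (Fin k))) (nu : Multiset (Fin k) → ℝ)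
    (p : Fin k → ℝ) (h0 : ∀ e, 0 ≤ nu e)
    (hs : ∑ e ∈ Z, nu e • edgePoint e = p) (s : Fin k) :
    0 < p s ↔ ∃ e ∈ Z, 0 < nu e ∧ s ∈ e := by
  have hps : p s = ∑ e ∈ Z, nu e * ((e.count s : ℝ) / 2) := by
    rw [← hs]
    rw [Finset.sum_apply]
    refine Finset.sum_congr rfl fun e _ => ?_
    simp only [Pi.smul_apply, edgePoint, smul_eq_mul, altWalk_count_apply]
    ring
  have hterm : ∀ e ∈ Z, 0 ≤ nu e * ((e.count s : ℝ) / 2) := fun e _ =>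
    mul_nonneg (h0 e) (by positivity)
  rw [hps]
  constructor
  · intro h
    by_contra hc
    push_neg at hc
    have : ∀ e ∈ Z, nu e * ((e.count s : ℝ) / 2) = 0 := by
      intro e he
      rcases (h0 e).lt_or_eq with hpos | hzero
      · have hse : s ∉ e := fun hmem => (hc e he hpos) hmem
        rw [Multiset.count_eq_zero_of_notMem hse]
        simp
      · rw [← hzero, zero_mul]
    rw [Finset.sum_eq_zero this] at h
    exact lt_irrefl 0 h
  · rintro ⟨e, heZ, hne, hse⟩
    refine Finset.sum_pos' hterm ⟨e, heZ, ?_⟩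
    have : 0 < e.count s := Multiset.count_pos.mpr hse
    have : (1 : ℝ) ≤ (e.count s : ℝ) := by exact_mod_cast this
    nlinarith

lemma altWalk_pair_decomp {k : ℕ} (e : Multiset (Fin k)) (h2 : Multiset.card e = 2)
    {s : Fin k} (hs : s ∈ e) : ∃ t, e = {s, t} := by
  have h1 : Multiset.card (e.erase s) = 1 := by
    rw [Multiset.card_erase_of_mem hs, h2]
    rfl
  obtain ⟨t, ht⟩ := Multiset.card_eq_one.mp h1
  refine ⟨t, ?_⟩
  rw [← Multiset.cons_erase hs, ht]
  rfl

/-- a pair `(X, Y)` is `(k,2)`-unacceptable (the convex hulls of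
the associated edge-point sets intersect) iff `Gr(X,Y)` has an alternating
closed walk. -/
theorem stmt_14 (k : ℕ) (X Y : Finset (Multiset (Fin k))) (hXY : Disjoint X Y)
    (hcard : ∀ e ∈ X ∪ Y, Multiset.card e = 2) :
    (∃ p : Fin k → ℝ, p ∈ convexHull ℝ (edgePoint '' (X : Set (Multiset (Fin k)))) ∧
      p ∈ convexHull ℝ (edgePoint '' (Y : Set (Multiset (Fin k))))) ↔
    IsAltClosedWalk X Y := by
  classical
  constructor
  · rintro ⟨p, hpX, hpY⟩
    obtain ⟨lam, hl0, hl1, hlp⟩ := altWalk_exists_weights X p hpX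
    obtain ⟨mu, hm0, hm1, hmp⟩ := altWalk_exists_weights Y p hpY
    have actX : ∀ s, 0 < p s ↔ ∃ e ∈ X, 0 < lam e ∧ s ∈ e :=
      altWalk_active X lam p hl0 hlp
    have actY : ∀ s, 0 < p s ↔ ∃ e ∈ Y, 0 < mu e ∧ s ∈ e :=
      altWalk_active Y mu p hm0 hmp
    -- step functions
    have dstep_ex : ∀ s : Fin k, ∃ u, 0 < p s →
        ({s, u} : Multiset (Fin k)) ∈ X ∧ 0 < p u := by
      intro s
      by_cases hA : 0 < p s
      · obtain ⟨e, heX, hle, hse⟩ := (actX s).mp hA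
        obtain ⟨u, rfl⟩ := altWalk_pair_decomp e (hcard e (Finset.mem_union_left _ heX)) hse
        refine ⟨u, fun _ => ⟨heX, ?_⟩⟩
        refine (actX u).mpr ⟨_, heX, hle, ?_⟩
        simp [Multiset.insert_eq_cons]
      · exact ⟨s, fun h => absurd h hA⟩
    have lstep_ex : ∀ s : Fin k, ∃ u, 0 < p s →
        ({s, u} : Multiset (Fin k)) ∈ Y ∧ 0 < p u := by
      intro s
      by_cases hA : 0 < p s
      · obtain ⟨e, heY, hle, hse⟩ := (actY s).mp hA
        obtain ⟨u, rfl⟩ := altWalk_pair_decomp e (hcard e (Finset.mem_union_right _ heY)) hse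
        refine ⟨u, fun _ => ⟨heY, ?_⟩⟩
        refine (actY u).mpr ⟨_, heY, hle, ?_⟩
        simp [Multiset.insert_eq_cons]
      · exact ⟨s, fun h => absurd h hA⟩
    choose dstep hd using dstep_ex
    choose lstep hl using lstep_ex
    -- starting vertex
    have hex : ∃ e ∈ X, 0 < lam e := by
      by_contra hc
      push_neg at hc
      have : ∑ e ∈ X, lam e = 0 := Finset.sum_eq_zero fun e he =>
        le_antisymm (hc e he) (hl0 e)
      rw [this] at hl1
      norm_num at hl1
    obtain ⟨e0, he0X, hle0⟩ := hex
    have hne : e0 ≠ 0 := by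
      intro h
      have := hcard e0 (Finset.mem_union_left _ he0X)
      rw [h] at this
      simp at this
    obtain ⟨s0, hs0⟩ := Multiset.exists_mem_of_ne_zero hne
    have hAs0 : 0 < p s0 := (actX s0).mpr ⟨e0, he0X, hle0, hs0⟩
    -- the infinite walk
    set v : ℕ → Fin k :=
      fun n => Nat.rec s0 (fun i vi => if i % 2 = 0 then dstep vi else lstep vi) n with hv
    have hvsucc : ∀ i, v (i + 1) = if i % 2 = 0 then dstep (v i) else lstep (v i) :=
      fun i => rfl
    have hact : ∀ i, 0 < p (v i) := by
      intro i
      induction i with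
      | zero => exact hAs0
      | succ i ih =>
          rw [hvsucc i]
          split_ifs
          · exact (hd _ ih).2
          · exact (hl _ ih).2
    have hedge : ∀ i, ({v i, v (i + 1)} : Multiset (Fin k)) ∈ (if i % 2 = 0 then X else Y) := by
      intro i
      rw [hvsucc i]
      split_ifs with h
      · exact (hd _ (hact i)).1
      · exact (hl _ (hact i)).1
    -- pigeonhole
    obtain ⟨a, b, hab, heq⟩ :=
      Finite.exists_ne_map_eq_of_infinite (fun n : ℕ => v (2 * n))
    have key : ∀ a b : ℕ, a < b → v (2 * a) = v (2 * b) → IsAltClosedWalk X Y := by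
      intro a b hlt he
      refine ⟨b - a, by omega, fun i => v (2 * a + i), ?_, ?_⟩
      · show v (2 * a + 2 * (b - a)) = v (2 * a + 0)
        have h1 : 2 * a + 2 * (b - a) = 2 * b := by omega
        rw [h1]
        simpa using he.symm
      · intro i _
        have h2 := hedge (2 * a + i)
        have hmod : (2 * a + i) % 2 = i % 2 := by omega
        rw [hmod] at h2
        exact h2
    rcases hab.lt_or_gt with h | h
    · exact key a b h heq
    · exact key b a h heq.symm
  · rintro ⟨m, hm, v, hclose, hedge⟩
    set z : ℕ → (Fin k → ℝ) := fun i => edgePoint ({v (2 * i), v (2 * i + 1)} : Multiset (Fin k))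
      with hz
    set z' : ℕ → (Fin k → ℝ) :=
      fun i => edgePoint ({v (2 * i + 1), v (2 * i + 1 + 1)} : Multiset (Fin k)) with hz'
    set g : ℕ → (Fin k → ℝ) := fun i => (2 : ℝ)⁻¹ • (Pi.single (v (2 * i)) (1:ℝ) : Fin k → ℝ) with hg
    have hsum : ∑ i ∈ Finset.range m, z i = ∑ i ∈ Finset.range m, z' i := by
      rw [← sub_eq_zero, ← Finset.sum_sub_distrib]
      have hstep : ∀ i, z i - z' i = g i - g (i + 1) := by
        intro i
        have h1 : 2 * (i + 1) = 2 * i + 1 + 1 := by ring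
        rw [hz, hz', hg]
        simp only [altWalk_edgePoint_pair, h1]
        rw [smul_add, smul_add]
        abel
      calc ∑ i ∈ Finset.range m, (z i - z' i)
          = ∑ i ∈ Finset.range m, (g i - g (i + 1)) :=
            Finset.sum_congr rfl fun i _ => hstep i
        _ = g 0 - g m := Finset.sum_range_sub' g m
        _ = 0 := by rw [hg]; simp only [Nat.mul_zero]; rw [hclose]; simp
    refine ⟨(Finset.range m).centerMass (fun _ => (1:ℝ)) z, ?_, ?_⟩
    · refine Finset.centerMass_mem_convexHull _ (fun i _ => zero_le_one) ?_ ?_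
      · simp [hm]
      · intro i hi
        refine ⟨{v (2 * i), v (2 * i + 1)}, ?_, rfl⟩
        have := hedge (2 * i) (by simp at hi; omega)
        simpa using this
    · have hcm : (Finset.range m).centerMass (fun _ => (1:ℝ)) z
          = (Finset.range m).centerMass (fun _ => (1:ℝ)) z' := by
        simp only [Finset.centerMass, one_smul, hsum]
      rw [hcm]
      refine Finset.centerMass_mem_convexHull _ (fun i _ => zero_le_one) ?_ ?_
      · simp [hm]
      · intro i hi
        refine ⟨{v (2 * i + 1), v (2 * i + 1 + 1)}, ?_, rfl⟩
        have h1 : 2 * i + 1 < 2 * m := by simp at hi; omega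
        have := hedge (2 * i + 1) h1
        have hmod : (2 * i + 1) % 2 = 1 := by omega
        rw [hmod] at this
        simpa using this
end

section
/- In the two-colored multigraph consisting of a single cycle of even length n ≥ 4 whose edges alternate in color around the cycle, the cycle itself is an alternating closed walk; however, if a connected two-colored multigraph with minimum degree ≥ 2 (counting loops twice) contains no even cycle and at most one odd cycle, it contains no alternating closed walk. -/
set_option maxHeartbeats 1000000


/-- `v` describes a cycle of length `n` in the multigraph with edge set `E`:
a closed walk on pairwise distinct vertices (a loop for `n = 1`; parallel edges
cannot arise since edges form a set, so otherwise `n ≥ 3`). -/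
def IsCycleOn {S : Type*} [DecidableEq S] (E : Finset (Multiset S)) (n : ℕ)
    (v : ℕ → S) : Prop :=
  (n = 1 ∨ 3 ≤ n) ∧ (∀ i < n, ∀ j < n, v i = v j → i = j) ∧ v n = v 0 ∧
    ∀ i < n, ({v i, v (i + 1)} : Multiset S) ∈ E

/-- The edge set of a cycle. -/
def cycleEdges {S : Type*} [DecidableEq S] (n : ℕ) (v : ℕ → S) :
    Set (Multiset S) :=
  {e | ∃ i < n, e = ({v i, v (i + 1)} : Multiset S)}

lemma pair_cases {S : Type*} [DecidableEq S] {a b c d : S}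
    (h : ({a, b} : Multiset S) = {c, d}) : (a = c ∧ b = d) ∨ (a = d ∧ b = c) := by
  have h' : (a ::ₘ {b} : Multiset S) = c ::ₘ {d} := by
    simpa [Multiset.insert_eq_cons] using h
  rcases Multiset.cons_eq_cons.mp h' with ⟨h1, h2⟩ | ⟨h1, cs, h2, h3⟩
  · exact Or.inl ⟨h1, Multiset.singleton_inj.mp h2⟩
  · have hcs : cs = 0 := by
      have hcard := congrArg Multiset.card h2
      simp at hcard
      exact hcard
    subst hcs
    simp at h2 h3
    exact Or.inr ⟨h3.symm, h2⟩

lemma extract_odd_cycle {S : Type*} [DecidableEq S] (E : Finset (Multiset S))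
    (hNoEven : ∀ (n : ℕ) (v : ℕ → S), n % 2 = 0 → ¬ IsCycleOn E n v) :
    ∀ (n : ℕ), n % 2 = 1 → ∀ w : ℕ → S, w n = w 0 →
      (∀ k < n, ({w k, w (k + 1)} : Multiset S) ∈ E) →
      ∃ n₂ u, n₂ % 2 = 1 ∧ IsCycleOn E n₂ u ∧
        ∀ k < n₂, ∃ q < n, ({u k, u (k + 1)} : Multiset S) = {w q, w (q + 1)} := by
  intro n
  induction n using Nat.strong_induction_on with
  | _ n ih =>
    intro hodd w hcl hE
    classical
    have hn1 : 1 ≤ n := by omega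
    have hPex : ∃ d, 0 < d ∧ ∃ a, a + d ≤ n ∧ w a = w (a + d) :=
      ⟨n, hn1, 0, by simpa using hcl.symm⟩
    obtain ⟨hgpos, a, hale, heq⟩ := Nat.find_spec hPex
    set g := Nat.find hPex with hgdef
    have hming : ∀ d, d < g → ¬(0 < d ∧ ∃ a, a + d ≤ n ∧ w a = w (a + d)) :=
      fun d hd => Nat.find_min hPex hd
    have hdist : ∀ p < g, ∀ q < g, w (a + p) = w (a + q) → p = q := by
      intro p hp q hq hpq
      by_contra hne
      rcases Nat.lt_or_ge p q with h | h
      · exact hming (q - p) (by omega)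
          ⟨by omega, a + p, by omega, by rw [show a + p + (q - p) = a + q by omega]; exact hpq⟩
      · exact hming (p - q) (by omega)
          ⟨by omega, a + q, by omega, by rw [show a + q + (p - q) = a + p by omega]; exact hpq.symm⟩
    by_cases hg1 : g = 1
    · rw [hg1] at heq
      refine ⟨1, fun k => w (a + k), rfl, ⟨Or.inl rfl, ?_, ?_, ?_⟩, ?_⟩
      · intro i hi j hj _; omega
      · simpa using heq.symm
      · intro k hk
        have hk0 : k = 0 := by omega
        subst hk0
        simpa using hE a (by omega)
      · intro k hk
        have hk0 : k = 0 := by omega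
        subst hk0
        exact ⟨a, by omega, by simp⟩
    by_cases hg2 : g = 2
    · rw [hg2] at heq hale
      have hn3 : 3 ≤ n := by omega
      have hw2 : w (a + 2) = w a := heq.symm
      set w' : ℕ → S := fun k => if k < a then w k else w (k + 2) with hw'def
      have key : ∀ k < n - 2, ∃ q < n,
          ({w' k, w' (k + 1)} : Multiset S) = {w q, w (q + 1)} := by
        intro k hk
        by_cases h1 : k + 1 < a
        · exact ⟨k, by omega, by simp [hw'def, h1, show k < a by omega]⟩
        · by_cases h2 : k < a
          · refine ⟨k, by omega, ?_⟩
            simp only [hw'def, if_pos h2, if_neg h1]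
            have hv : w (k + 1 + 2) = w (k + 1) := by
              rw [show k + 1 = a by omega]; exact hw2
            rw [hv]
          · refine ⟨k + 2, by omega, ?_⟩
            simp only [hw'def, if_neg h2, if_neg (show ¬(k + 1 < a) by omega)]
      have hcl' : w' (n - 2) = w' 0 := by
        have h1 : w' (n - 2) = w 0 := by
          simp only [hw'def, if_neg (show ¬(n - 2 < a) by omega)]
          rw [show n - 2 + 2 = n by omega, hcl]
        rw [h1]
        by_cases h0 : 0 < a
        · simp [hw'def, h0]
        · have ha0 : a = 0 := by omega
          simp only [hw'def, if_neg (show ¬((0:ℕ) < a) by omega)]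
          rw [ha0] at hw2
          simpa using hw2.symm
      have hE' : ∀ k < n - 2, ({w' k, w' (k + 1)} : Multiset S) ∈ E := by
        intro k hk
        obtain ⟨q, hq, he⟩ := key k hk
        rw [he]; exact hE q hq
      obtain ⟨n₂, u, ho₂, hc₂, hs₂⟩ := ih (n - 2) (by omega) (by omega) w' hcl' hE'
      refine ⟨n₂, u, ho₂, hc₂, ?_⟩
      intro k hk
      obtain ⟨q', hq', he'⟩ := hs₂ k hk
      obtain ⟨q, hq, he''⟩ := key q' hq'
      exact ⟨q, hq, he'.trans he''⟩
    -- g ≥ 3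
    have hg3 : 3 ≤ g := by omega
    have hcyc : IsCycleOn E g (fun k => w (a + k)) := by
      refine ⟨Or.inr hg3, hdist, ?_, ?_⟩
      · simpa using heq.symm
      · intro k hk
        have : a + k + 1 = a + (k + 1) := by omega
        simpa [this] using hE (a + k) (by omega)
    by_cases hgo : g % 2 = 0
    · exact absurd hcyc (hNoEven g _ hgo)
    · refine ⟨g, fun k => w (a + k), by omega, hcyc, ?_⟩
      intro k hk
      exact ⟨a + k, by omega, by simp [show a + (k + 1) = a + k + 1 by omega]⟩

lemma core {S : Type*} [DecidableEq S] (X Y : Finset (Multiset S)) (hdisj : Disjoint X Y)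
    (hNoEven : ∀ (n : ℕ) (v : ℕ → S), n % 2 = 0 → ¬ IsCycleOn (X ∪ Y) n v)
    (hOdd : ∀ (n n' : ℕ) (v v' : ℕ → S), n % 2 = 1 → n' % 2 = 1 →
      IsCycleOn (X ∪ Y) n v → IsCycleOn (X ∪ Y) n' v' → cycleEdges n v = cycleEdges n' v')
    (m : ℕ) (hm : 0 < m) (v : ℕ → S) (hc : v (2 * m) = v 0)
    (ha : ∀ i < 2 * m, ({v i, v (i + 1)} : Multiset S) ∈ (if i % 2 = 0 then X else Y))
    (hmin : ∀ a b : ℕ, a < b → b ≤ 2 * m → b - a < 2 * m → (b - a) % 2 = 0 → v a ≠ v b) :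
    False := by
  classical
  have hXY : ∀ i < 2 * m, ({v i, v (i + 1)} : Multiset S) ∈ X ∪ Y := by
    intro i hi
    have h := ha i hi
    by_cases h2 : i % 2 = 0
    · rw [if_pos h2] at h; exact Finset.mem_union_left _ h
    · rw [if_neg h2] at h; exact Finset.mem_union_right _ h
  have parity : ∀ p q, p < 2 * m → q < 2 * m →
      ({v p, v (p + 1)} : Multiset S) = {v q, v (q + 1)} → p % 2 = q % 2 := by
    intro p q hp hq hpq
    by_contra hne
    have h1 := ha p hp
    have h2 := ha q hq
    rw [hpq] at h1
    by_cases hp2 : p % 2 = 0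
    · rw [if_pos hp2] at h1
      rw [if_neg (by omega)] at h2
      exact Finset.disjoint_left.mp hdisj h1 h2
    · rw [if_neg hp2] at h1
      rw [if_pos (by omega)] at h2
      exact Finset.disjoint_left.mp hdisj h2 h1
  have hPex : ∃ d, 0 < d ∧ ∃ a, a + d ≤ 2 * m ∧ v a = v (a + d) :=
    ⟨2 * m, by omega, 0, by simpa using hc.symm⟩
  obtain ⟨hgpos, i, hile, heq⟩ := Nat.find_spec hPex
  set g := Nat.find hPex with hgdef
  have hming : ∀ d, d < g → ¬(0 < d ∧ ∃ a, a + d ≤ 2 * m ∧ v a = v (a + d)) :=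
    fun d hd => Nat.find_min hPex hd
  have hdist : ∀ p < g, ∀ q < g, v (i + p) = v (i + q) → p = q := by
    intro p hp q hq hpq
    by_contra hne
    rcases Nat.lt_or_ge p q with h | h
    · exact hming (q - p) (by omega)
        ⟨by omega, i + p, by omega, by rw [show i + p + (q - p) = i + q by omega]; exact hpq⟩
    · exact hming (p - q) (by omega)
        ⟨by omega, i + q, by omega, by rw [show i + q + (p - q) = i + p by omega]; exact hpq.symm⟩
  have hg2 : g ≠ 2 := by
    intro h
    rw [h] at heq hile
    have hpe : ({v i, v (i + 1)} : Multiset S) = {v (i + 1), v (i + 1 + 1)} := by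
      rw [show i + 1 + 1 = i + 2 by omega, heq.symm]
      exact Multiset.pair_comm _ _
    have := parity i (i + 1) (by omega) (by omega) hpe
    omega
  have hcycC : IsCycleOn (X ∪ Y) g (fun k => v (i + k)) := by
    refine ⟨by omega, hdist, ?_, ?_⟩
    · simpa using heq.symm
    · intro k hk
      have h1 : i + k + 1 = i + (k + 1) := by omega
      simpa [h1] using hXY (i + k) (by omega)
  have hgodd : g % 2 = 1 := by
    rcases Nat.mod_two_eq_zero_or_one g with h | h
    · exact absurd hcycC (hNoEven g _ h)
    · exact h
  have hlt : g < 2 * m := by omega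
  set n' := 2 * m - g with hn'def
  set w' : ℕ → S := fun k => if k < i then v k else v (k + g) with hw'def
  have hvig : v (i + g) = v i := heq.symm
  have key : ∀ k < n', ∃ q, q < 2 * m ∧ (q < i ∨ i + g ≤ q) ∧
      ({w' k, w' (k + 1)} : Multiset S) = {v q, v (q + 1)} := by
    intro k hk
    by_cases h1 : k + 1 < i
    · exact ⟨k, by omega, Or.inl (by omega), by simp [hw'def, h1, show k < i by omega]⟩
    · by_cases h2 : k < i
      · refine ⟨k, by omega, Or.inl h2, ?_⟩
        simp only [hw'def, if_pos h2, if_neg h1]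
        have hv : v (k + 1 + g) = v (k + 1) := by
          rw [show k + 1 = i by omega]; exact hvig
        rw [hv]
      · refine ⟨k + g, by omega, Or.inr (by omega), ?_⟩
        simp only [hw'def, if_neg h2, if_neg (show ¬(k + 1 < i) by omega)]
        rw [show k + 1 + g = k + g + 1 by omega]
  have hcl' : w' n' = w' 0 := by
    have h1 : w' n' = v 0 := by
      simp only [hw'def, if_neg (show ¬(n' < i) by omega)]
      rw [show n' + g = 2 * m by omega, hc]
    rw [h1]
    by_cases h0 : 0 < i
    · simp [hw'def, h0]
    · simp only [hw'def, if_neg (show ¬((0:ℕ) < i) by omega)]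
      rw [show (0:ℕ) + g = i + g by omega, hvig, show i = 0 by omega]
  have hE' : ∀ k < n', ({w' k, w' (k + 1)} : Multiset S) ∈ X ∪ Y := by
    intro k hk
    obtain ⟨q, hq, _, he⟩ := key k hk
    rw [he]; exact hXY q hq
  have hn'odd : n' % 2 = 1 := by omega
  obtain ⟨n₂, u, ho₂, hc₂, hs₂⟩ := extract_odd_cycle (X ∪ Y) hNoEven n' hn'odd w' hcl' hE'
  have hEdges := hOdd g n₂ _ u hgodd ho₂ hcycC hc₂
  have hEstar : ({v (i + g - 1), v (i + g)} : Multiset S) ∈ cycleEdges g (fun k => v (i + k)) := by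
    refine ⟨g - 1, by omega, ?_⟩
    simp only
    rw [show g - 1 + 1 = g by omega, show i + (g - 1) = i + g - 1 by omega]
  rw [hEdges] at hEstar
  obtain ⟨k, hk, hke⟩ := hEstar
  obtain ⟨q', hq', he'⟩ := hs₂ k hk
  obtain ⟨q, hqlt, hqout, he''⟩ := key q' hq'
  have hfinal : ({v (i + g - 1), v (i + g)} : Multiset S) = {v q, v (q + 1)} :=
    hke.trans (he'.trans he'')
  have hpar : (i + g - 1) % 2 = q % 2 :=
    parity (i + g - 1) q (by omega) hqlt
      (by rw [show i + g - 1 + 1 = i + g by omega]; exact hfinal)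
  rcases pair_cases hfinal with ⟨h1, _⟩ | ⟨_, h2⟩
  · -- v (i + g - 1) = v q
    rcases Nat.lt_or_ge q (i + g - 1) with hlt' | hge'
    · exact hmin q (i + g - 1) hlt' (by omega) (by omega) (by omega) h1.symm
    · have : i + g - 1 < q := by
        rcases hqout with h | h <;> omega
      exact hmin (i + g - 1) q this (by omega) (by omega) (by omega) h1
  · -- v (i + g) = v q, hence v q = v i
    have hq_i : v q = v i := by rw [← h2]; exact hvig
    have hqpar : q % 2 = i % 2 := by omega
    rcases Nat.lt_or_ge q i with hlt' | hge'
    · exact hmin q i hlt' (by omega) (by omega) (by omega) hq_i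
    · have : i < q := by rcases hqout with h | h <;> omega
      exact hmin i q this (by omega) (by omega) (by omega) hq_i.symm

def AW {S : Type*} [DecidableEq S] (X Y : Finset (Multiset S)) (m : ℕ) : Prop :=
  ∃ v : ℕ → S, v (2 * m) = v 0 ∧
    ∀ i < 2 * m, ({v i, v (i + 1)} : Multiset S) ∈ (if i % 2 = 0 then X else Y)

theorem part2 {S : Type*} [DecidableEq S] (X Y : Finset (Multiset S)) (hdisj : Disjoint X Y)
    (hNoEven : ∀ (n : ℕ) (v : ℕ → S), n % 2 = 0 → ¬ IsCycleOn (X ∪ Y) n v)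
    (hOdd : ∀ (n n' : ℕ) (v v' : ℕ → S), n % 2 = 1 → n' % 2 = 1 →
      IsCycleOn (X ∪ Y) n v → IsCycleOn (X ∪ Y) n' v' → cycleEdges n v = cycleEdges n' v') :
    ¬ IsAltClosedWalk X Y := by
  classical
  intro halt
  obtain ⟨m₁, hm₁, hw₁⟩ := halt
  have hT : ∃ m, 0 < m ∧ (AW X Y m ∨ AW Y X m) := ⟨m₁, hm₁, Or.inl hw₁⟩
  obtain ⟨hm, hw⟩ := Nat.find_spec hT
  set m := Nat.find hT with hmdef
  have hminT : ∀ m', m' < m → ¬(0 < m' ∧ (AW X Y m' ∨ AW Y X m')) :=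
    fun m' h => Nat.find_min hT h
  have subwalk : ∀ (A B : Finset (Multiset S)) (v : ℕ → S),
      ((A = X ∧ B = Y) ∨ (A = Y ∧ B = X)) →
      (∀ i < 2 * m, ({v i, v (i + 1)} : Multiset S) ∈ (if i % 2 = 0 then A else B)) →
      ∀ a b : ℕ, a < b → b ≤ 2 * m → b - a < 2 * m → (b - a) % 2 = 0 → v a ≠ v b := by
    intro A B v hAB hav a b hab hble hblt hpar hveq
    set m'' := (b - a) / 2 with hm''def
    have h0 : 0 < m'' := by omega
    have hclosed : (fun k => v (a + k)) (2 * m'') = (fun k => v (a + k)) 0 := by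
      simp only
      rw [show a + 2 * m'' = b by omega]
      simpa using hveq.symm
    have hAW : AW A B m'' ∨ AW B A m'' := by
      by_cases hae : a % 2 = 0
      · left
        refine ⟨fun k => v (a + k), hclosed, ?_⟩
        intro k hk
        have h := hav (a + k) (by omega)
        have hp : (a + k) % 2 = k % 2 := by omega
        rw [hp] at h
        simpa [show a + k + 1 = a + (k + 1) by omega] using h
      · right
        refine ⟨fun k => v (a + k), hclosed, ?_⟩
        intro k hk
        have h := hav (a + k) (by omega)
        by_cases hk2 : k % 2 = 0
        · rw [if_neg (show ¬((a + k) % 2 = 0) by omega)] at h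
          rw [if_pos hk2]
          simpa [show a + k + 1 = a + (k + 1) by omega] using h
        · rw [if_pos (show (a + k) % 2 = 0 by omega)] at h
          rw [if_neg hk2]
          simpa [show a + k + 1 = a + (k + 1) by omega] using h
    have hm''lt : m'' < m := by omega
    rcases hAB with ⟨hA, hB⟩ | ⟨hA, hB⟩ <;> subst hA <;> subst hB
    · exact hminT m'' hm''lt ⟨h0, Or.imp id id hAW⟩
    · exact hminT m'' hm''lt ⟨h0, hAW.symm⟩
  rcases hw with hXYw | hYXw
  · obtain ⟨v, hcv, hav⟩ := hXYw
    exact core X Y hdisj hNoEven hOdd m hm v hcv hav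
      (subwalk X Y v (Or.inl ⟨rfl, rfl⟩) hav)
  · obtain ⟨v, hcv, hav⟩ := hYXw
    rw [Finset.union_comm X Y] at hNoEven hOdd
    exact core Y X hdisj.symm hNoEven hOdd m hm v hcv hav
      (subwalk Y X v (Or.inr ⟨rfl, rfl⟩) hav)

/-- (1) a single even cycle of length `n ≥ 4` whose edges
alternate in colour is itself an alternating closed walk; (2) a connected
two-coloured multigraph with minimum degree ≥ 2 (loops counted twice), no even
cycle and at most one odd cycle has no alternating closed walk. -/
theorem stmt_15 (S : Type*) [Fintype S] [DecidableEq S] :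
    (∀ (X Y : Finset (Multiset S)) (n : ℕ) (v : ℕ → S), 4 ≤ n → n % 2 = 0 →
      (∀ i < n, ∀ j < n, v i = v j → i = j) → v n = v 0 →
      (∀ i < n, ({v i, v (i + 1)} : Multiset S) ∈ (if i % 2 = 0 then X else Y)) →
      IsAltClosedWalk X Y) ∧
    (∀ X Y : Finset (Multiset S), Disjoint X Y →
      (∀ e ∈ X ∪ Y, Multiset.card e = 2) →
      -- connectedness
      (∀ a b : S, (∃ e ∈ X ∪ Y, a ∈ e) → (∃ e ∈ X ∪ Y, b ∈ e) →
        ∃ (n : ℕ) (w : ℕ → S), w 0 = a ∧ w n = b ∧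
          ∀ i < n, ({w i, w (i + 1)} : Multiset S) ∈ X ∪ Y) →
      -- minimum degree at least two, loops counted twice
      (∀ s : S, (∃ e ∈ X ∪ Y, s ∈ e) →
        2 ≤ ∑ e ∈ X ∪ Y, Multiset.count s e) →
      -- no even cycle
      (∀ (n : ℕ) (v : ℕ → S), n % 2 = 0 → ¬ IsCycleOn (X ∪ Y) n v) →
      -- at most one odd cycle
      (∀ (n n' : ℕ) (v v' : ℕ → S), n % 2 = 1 → n' % 2 = 1 →
        IsCycleOn (X ∪ Y) n v → IsCycleOn (X ∪ Y) n' v' →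
        cycleEdges n v = cycleEdges n' v') →
      ¬ IsAltClosedWalk X Y) := by
  constructor
  · intro X Y n v h4 h2 _ hclosed hcol
    refine ⟨n / 2, by omega, v, ?_, fun i hi => hcol i (by omega)⟩
    rw [show 2 * (n / 2) = n by omega]
    exact hclosed
  · intro X Y hdisj _ _ _ hNoEven hOdd
    exact part2 X Y hdisj hNoEven hOdd
end

section
/- Let G be a two-colored graph consisting of two vertex-disjoint odd cycles C' and C joined by a simple path P from a vertex of C' to a vertex of C (a dumbbell graph), colored so that at each vertex of degree 2 the incident edges have different colors, and at the junction vertices edges on the same cycle may share colors appropriately (a 'good colouring'). Then G admits an alternating closed walk that traverses each cycle once and the path P twice. -/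
namespace Stmt16

lemma range_reflect (n : ℕ) :
    (Multiset.range n).map (fun j => n - 1 - j) = Multiset.range n := by
  have h1 : ((Multiset.range n).map (fun j => n - 1 - j)).Nodup := by
    refine Multiset.Nodup.map_on ?_ (Multiset.nodup_range n)
    intro x hx y hy h
    simp only [Multiset.mem_range] at hx hy
    omega
  rw [Multiset.Nodup.ext h1 (Multiset.nodup_range n)]
  intro x
  simp only [Multiset.mem_map, Multiset.mem_range]
  constructor
  · rintro ⟨j, hj, rfl⟩; omega
  · intro hx; exact ⟨n - 1 - x, by omega, by omega⟩

end Stmt16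


/-- a good colouring of a dumbbell graph (two vertex-disjoint odd
cycles `C'`, `C` joined by a simple path `P`) admits an alternating closed walk
traversing each cycle once and the path twice.  Edges are size-2 multisets;
`X` and `Y` are the two colour classes.  The good colouring conditions say that
edges alternate along each cycle and along the path except that the two cycle
edges at each junction share a colour, which differs from that of the incident
path edge. -/
theorem stmt_16 (S : Type*) [DecidableEq S]
    (X Y : Finset (Multiset S)) (hXY : Disjoint X Y)
    (a b ℓ : ℕ) (ha1 : 1 ≤ a) (hb1 : 1 ≤ b) (hl1 : 1 ≤ ℓ)
    (haodd : a % 2 = 1) (hbodd : b % 2 = 1)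
    (c' c p : ℕ → S)
    -- `c'` is a cycle of length `a`, `c` a cycle of length `b`
    (hc'cl : c' a = c' 0) (hccl : c b = c 0)
    (hc'inj : ∀ i < a, ∀ j < a, c' i = c' j → i = j)
    (hcinj : ∀ i < b, ∀ j < b, c i = c j → i = j)
    -- `p` is a simple path of length `ℓ` from `c' 0` to `c 0`
    (hp0 : p 0 = c' 0) (hpl : p ℓ = c 0)
    (hpinj : ∀ i ≤ ℓ, ∀ j ≤ ℓ, p i = p j → i = j)
    -- the two cycles are vertex-disjoint, and the interior of the path avoids both
    (hdisj : ∀ i < a, ∀ j < b, c' i ≠ c j)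
    (hpint : ∀ j, 0 < j → j < ℓ →
      (∀ i < a, p j ≠ c' i) ∧ (∀ i < b, p j ≠ c i))
    -- all edges of the dumbbell are coloured
    (hc'mem : ∀ i < a, ({c' i, c' (i + 1)} : Multiset S) ∈ X ∪ Y)
    (hcmem : ∀ i < b, ({c i, c (i + 1)} : Multiset S) ∈ X ∪ Y)
    (hpmem : ∀ j < ℓ, ({p j, p (j + 1)} : Multiset S) ∈ X ∪ Y)
    -- good colouring: alternation at every degree-2 vertex
    (hc'alt : ∀ i, i + 1 < a →
      (({c' i, c' (i + 1)} : Multiset S) ∈ X ↔ ({c' (i + 1), c' (i + 2)} : Multiset S) ∈ Y))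
    (hcalt : ∀ i, i + 1 < b →
      (({c i, c (i + 1)} : Multiset S) ∈ X ↔ ({c (i + 1), c (i + 2)} : Multiset S) ∈ Y))
    (hpalt : ∀ j, j + 1 < ℓ →
      (({p j, p (j + 1)} : Multiset S) ∈ X ↔ ({p (j + 1), p (j + 2)} : Multiset S) ∈ Y))
    -- good colouring: the two cycle edges at each junction share a colour
    (hc'junc : (({c' (a - 1), c' a} : Multiset S) ∈ X ↔ ({c' 0, c' 1} : Multiset S) ∈ X))
    (hcjunc : (({c (b - 1), c b} : Multiset S) ∈ X ↔ ({c 0, c 1} : Multiset S) ∈ X))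
    -- good colouring: path edges at the junctions differ in colour from the cycle edges there
    (hjunc1 : (({p 0, p 1} : Multiset S) ∈ X ↔ ({c' 0, c' 1} : Multiset S) ∈ Y))
    (hjunc2 : (({p (ℓ - 1), p ℓ} : Multiset S) ∈ X ↔ ({c 0, c 1} : Multiset S) ∈ Y)) :
    ∃ v : ℕ → S,
      v (a + b + 2 * ℓ) = v 0 ∧
      (∀ i < a + b + 2 * ℓ, ({v i, v (i + 1)} : Multiset S) ∈ X ∪ Y) ∧
      (∀ i, i + 1 < a + b + 2 * ℓ →
        (({v i, v (i + 1)} : Multiset S) ∈ X ↔ ({v (i + 1), v (i + 2)} : Multiset S) ∈ Y)) ∧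
      (({v (a + b + 2 * ℓ - 1), v (a + b + 2 * ℓ)} : Multiset S) ∈ X ↔
        ({v 0, v 1} : Multiset S) ∈ Y) ∧
      (Multiset.range (a + b + 2 * ℓ)).map (fun i => ({v i, v (i + 1)} : Multiset S)) =
        (Multiset.range a).map (fun i => ({c' i, c' (i + 1)} : Multiset S)) +
        (Multiset.range b).map (fun i => ({c i, c (i + 1)} : Multiset S)) +
        2 • (Multiset.range ℓ).map (fun j => ({p j, p (j + 1)} : Multiset S)) := by
  classical
  set v : ℕ → S := fun i =>
    if i < a then c' i else if i < a + ℓ then p (i - a)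
    else if i < a + ℓ + b then c (i - a - ℓ) else p (a + b + 2 * ℓ - i) with hvdef
  -- value lemmas
  have hv1 : ∀ i ≤ a, v i = c' i := by
    intro i hi
    rcases lt_or_eq_of_le hi with h | h
    · simp only [hvdef]; rw [if_pos h]
    · rw [h]
      simp only [hvdef]
      rw [if_neg (by omega), if_pos (by omega), Nat.sub_self, hp0, hc'cl]
  have hv2 : ∀ j ≤ ℓ, v (a + j) = p j := by
    intro j hj
    rcases lt_or_eq_of_le hj with h | h
    · simp only [hvdef]
      rw [if_neg (by omega), if_pos (by omega), Nat.add_sub_cancel_left]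
    · rw [h]
      simp only [hvdef]
      rw [if_neg (by omega), if_neg (by omega), if_pos (by omega),
        show a + ℓ - a - ℓ = 0 by omega, hpl]
  have hv3 : ∀ j ≤ b, v (a + ℓ + j) = c j := by
    intro j hj
    rcases lt_or_eq_of_le hj with h | h
    · simp only [hvdef]
      rw [if_neg (by omega), if_neg (by omega), if_pos (by omega),
        show a + ℓ + j - a - ℓ = j by omega]
    · rw [h]
      simp only [hvdef]
      rw [if_neg (by omega), if_neg (by omega), if_neg (by omega),
        show a + b + 2 * ℓ - (a + ℓ + b) = ℓ by omega, hpl, hccl]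
  have hv4 : ∀ j ≤ ℓ, v (a + ℓ + b + j) = p (ℓ - j) := by
    intro j hj
    simp only [hvdef]
    rw [if_neg (by omega), if_neg (by omega), if_neg (by omega),
      show a + b + 2 * ℓ - (a + ℓ + b + j) = ℓ - j by omega]
  -- edge lemmas
  have hE1 : ∀ i < a, ({v i, v (i + 1)} : Multiset S) = {c' i, c' (i + 1)} := by
    intro i hi; rw [hv1 i (by omega), hv1 (i + 1) (by omega)]
  have hE2 : ∀ j < ℓ, ({v (a + j), v (a + j + 1)} : Multiset S) = {p j, p (j + 1)} := by
    intro j hj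
    rw [show a + j + 1 = a + (j + 1) by omega, hv2 j (by omega), hv2 (j + 1) (by omega)]
  have hE3 : ∀ j < b, ({v (a + ℓ + j), v (a + ℓ + j + 1)} : Multiset S) = {c j, c (j + 1)} := by
    intro j hj
    rw [show a + ℓ + j + 1 = a + ℓ + (j + 1) by omega, hv3 j (by omega), hv3 (j + 1) (by omega)]
  have hE4 : ∀ j < ℓ, ({v (a + ℓ + b + j), v (a + ℓ + b + j + 1)} : Multiset S)
      = {p (ℓ - 1 - j), p (ℓ - 1 - j + 1)} := by
    intro j hj
    rw [show a + ℓ + b + j + 1 = a + ℓ + b + (j + 1) by omega, hv4 j (by omega),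
      hv4 (j + 1) (by omega), show ℓ - (j + 1) = ℓ - 1 - j by omega,
      show ℓ - j = ℓ - 1 - j + 1 by omega]
    exact Multiset.cons_swap _ _ _
  -- colour helpers
  have hd : ∀ e : Multiset S, e ∈ X → e ∈ Y → False :=
    fun e hx hy => Finset.disjoint_left.mp hXY hx hy
  have revalt : ∀ k, k + 1 < ℓ →
      (({p (k + 1), p (k + 2)} : Multiset S) ∈ X ↔ ({p k, p (k + 1)} : Multiset S) ∈ Y) := by
    intro k hk
    have h1 := hpalt k hk
    have h2 := hpmem k (by omega)
    have h3 := hpmem (k + 1) hk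
    rw [Finset.mem_union] at h2 h3
    constructor
    · intro hBX
      rcases h2 with hAX | hAY
      · exact (hd _ hBX (h1.mp hAX)).elim
      · exact hAY
    · intro hAY
      rcases h3 with hBX | hBY
      · exact hBX
      · exact (hd _ (h1.mpr hBY) hAY).elim
  have L1 : ({c' (a - 1), c' a} : Multiset S) ∈ X ↔ ({p 0, p 1} : Multiset S) ∈ Y := by
    have h0 := hc'mem 0 (by omega)
    have h1 := hpmem 0 (by omega)
    simp only [zero_add] at h0 h1
    rw [Finset.mem_union] at h0 h1
    rw [hc'junc]
    constructor
    · intro hCX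
      rcases h1 with hPX | hPY
      · exact (hd _ hCX (hjunc1.mp hPX)).elim
      · exact hPY
    · intro hPY
      rcases h0 with hCX | hCY
      · exact hCX
      · exact (hd _ (hjunc1.mpr hCY) hPY).elim
  have L2 : ({c (b - 1), c b} : Multiset S) ∈ X ↔ ({p (ℓ - 1), p ℓ} : Multiset S) ∈ Y := by
    have h0 := hcmem 0 (by omega)
    have h1 := hpmem (ℓ - 1) (by omega)
    rw [show ℓ - 1 + 1 = ℓ by omega] at h1
    simp only [zero_add] at h0
    rw [Finset.mem_union] at h0 h1
    rw [hcjunc]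
    constructor
    · intro hCX
      rcases h1 with hPX | hPY
      · exact (hd _ hCX (hjunc2.mp hPX)).elim
      · exact hPY
    · intro hPY
      rcases h0 with hCX | hCY
      · exact hCX
      · exact (hd _ (hjunc2.mpr hCY) hPY).elim
  refine ⟨v, ?_, ?_, ?_, ?_, ?_⟩
  · rw [show a + b + 2 * ℓ = a + ℓ + b + ℓ by omega, hv4 ℓ le_rfl, Nat.sub_self,
      hv1 0 (by omega), hp0]
  · intro i hi
    rcases lt_or_ge i a with h | h
    · rw [hE1 i h]; exact hc'mem i h
    rcases lt_or_ge i (a + ℓ) with h2 | h2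
    · obtain ⟨j, rfl⟩ : ∃ j, i = a + j := ⟨i - a, by omega⟩
      rw [hE2 j (by omega)]; exact hpmem j (by omega)
    rcases lt_or_ge i (a + ℓ + b) with h3 | h3
    · obtain ⟨j, rfl⟩ : ∃ j, i = a + ℓ + j := ⟨i - a - ℓ, by omega⟩
      rw [hE3 j (by omega)]; exact hcmem j (by omega)
    · obtain ⟨j, rfl⟩ : ∃ j, i = a + ℓ + b + j := ⟨i - a - ℓ - b, by omega⟩
      rw [hE4 j (by omega)]; exact hpmem (ℓ - 1 - j) (by omega)
  · intro i hi
    rcases lt_or_ge (i + 1) a with h | h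
    · rw [hE1 i (by omega), show ({v (i+1), v (i+2)} : Multiset S) = {c' (i+1), c' (i+2)} from
        hE1 (i + 1) h]
      exact hc'alt i h
    rcases eq_or_lt_of_le h with h1 | h1
    · -- i + 1 = a
      have hia : i = a - 1 := by omega
      subst hia
      rw [show a - 1 + 2 = a + 1 by omega, show a - 1 + 1 = a by omega,
        hv1 (a - 1) (by omega), hv1 a le_rfl, hv2 1 hl1]
      rw [show ({c' (a - 1), c' a} : Multiset S) = {c' (a - 1), p 0} by rw [hp0, hc'cl],
        show ({c' a, p 1} : Multiset S) = {p 0, p 1} by rw [hc'cl, hp0]]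
      rw [show ({c' (a - 1), p 0} : Multiset S) = {c' (a - 1), c' a} by rw [hp0, hc'cl]]
      exact L1
    rcases lt_or_ge (i + 1) (a + ℓ) with h2 | h2
    · obtain ⟨j, rfl⟩ : ∃ j, i = a + j := ⟨i - a, by omega⟩
      rw [hE2 j (by omega), show ({v (a + j + 1), v (a + j + 2)} : Multiset S)
          = {v (a + (j + 1)), v (a + (j + 1) + 1)} by rw [show a + j + 1 = a + (j + 1) by omega,
            show a + j + 2 = a + (j + 1) + 1 by omega],
        hE2 (j + 1) (by omega)]
      exact hpalt j (by omega)
    rcases eq_or_lt_of_le h2 with h3 | h3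
    · -- i + 1 = a + ℓ
      obtain ⟨j, rfl⟩ : ∃ j, i = a + j := ⟨i - a, by omega⟩
      have hj : j = ℓ - 1 := by omega
      subst hj
      have hvl : v (a + ℓ) = c 0 := by simpa using hv3 0 (by omega)
      rw [show a + (ℓ - 1) + 2 = a + ℓ + 1 by omega, show a + (ℓ - 1) + 1 = a + ℓ by omega,
        hv2 (ℓ - 1) (by omega), hvl, hv3 1 hb1]
      rw [show ({p (ℓ - 1), c 0} : Multiset S) = {p (ℓ - 1), p ℓ} by rw [hpl]]
      exact hjunc2
    rcases lt_or_ge (i + 1) (a + ℓ + b) with h4 | h4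
    · obtain ⟨j, rfl⟩ : ∃ j, i = a + ℓ + j := ⟨i - a - ℓ, by omega⟩
      rw [hE3 j (by omega), show ({v (a + ℓ + j + 1), v (a + ℓ + j + 2)} : Multiset S)
          = {v (a + ℓ + (j + 1)), v (a + ℓ + (j + 1) + 1)} by
            rw [show a + ℓ + j + 1 = a + ℓ + (j + 1) by omega,
              show a + ℓ + j + 2 = a + ℓ + (j + 1) + 1 by omega],
        hE3 (j + 1) (by omega)]
      exact hcalt j (by omega)
    rcases eq_or_lt_of_le h4 with h5 | h5
    · -- i + 1 = a + ℓ + b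
      obtain ⟨j, rfl⟩ : ∃ j, i = a + ℓ + j := ⟨i - a - ℓ, by omega⟩
      have hj : j = b - 1 := by omega
      subst hj
      have hvb : v (a + ℓ + b) = p ℓ := by simpa using hv4 0 (by omega)
      rw [show a + ℓ + (b - 1) + 2 = a + ℓ + b + 1 by omega,
        show a + ℓ + (b - 1) + 1 = a + ℓ + b by omega,
        hv3 (b - 1) (by omega), hvb, hv4 1 hl1]
      rw [show ({c (b - 1), p ℓ} : Multiset S) = {c (b - 1), c b} by rw [hpl, hccl],
        show ({p ℓ, p (ℓ - 1)} : Multiset S) = {p (ℓ - 1), p ℓ} from Multiset.cons_swap _ _ _]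
      exact L2
    · -- both in last segment
      obtain ⟨j, rfl⟩ : ∃ j, i = a + ℓ + b + j := ⟨i - a - ℓ - b, by omega⟩
      rw [hE4 j (by omega), show ({v (a + ℓ + b + j + 1), v (a + ℓ + b + j + 2)} : Multiset S)
          = {v (a + ℓ + b + (j + 1)), v (a + ℓ + b + (j + 1) + 1)} by
            rw [show a + ℓ + b + j + 1 = a + ℓ + b + (j + 1) by omega,
              show a + ℓ + b + j + 2 = a + ℓ + b + (j + 1) + 1 by omega],
        hE4 (j + 1) (by omega)]
      rw [show ℓ - 1 - (j + 1) = ℓ - 2 - j by omega,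
        show ℓ - 1 - j = ℓ - 2 - j + 1 by omega,
        show ℓ - 2 - j + 1 + 1 = ℓ - 2 - j + 2 by omega]
      exact revalt (ℓ - 2 - j) (by omega)
  · -- wrap condition
    rw [show a + b + 2 * ℓ - 1 = a + ℓ + b + (ℓ - 1) by omega,
      show a + b + 2 * ℓ = a + ℓ + b + (ℓ - 1) + 1 by omega,
      hE4 (ℓ - 1) (by omega), show ℓ - 1 - (ℓ - 1) = 0 by omega,
      show ({v 0, v 1} : Multiset S) = {c' 0, c' 1} from hE1 0 (by omega)]
    simpa using hjunc1
  · -- multiset equality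
    rw [show a + b + 2 * ℓ = a + (ℓ + (b + ℓ)) by omega]
    simp only [Multiset.range_add, Multiset.map_add, Multiset.map_map, Function.comp_def]
    have P1 : (Multiset.range a).map (fun i => ({v i, v (i + 1)} : Multiset S))
        = (Multiset.range a).map (fun i => ({c' i, c' (i + 1)} : Multiset S)) := by
      refine Multiset.map_congr rfl fun x hx => ?_
      exact hE1 x (Multiset.mem_range.mp hx)
    have P2 : (Multiset.range ℓ).map (fun x => ({v (a + x), v (a + x + 1)} : Multiset S))
        = (Multiset.range ℓ).map (fun j => ({p j, p (j + 1)} : Multiset S)) := by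
      refine Multiset.map_congr rfl fun x hx => ?_
      exact hE2 x (Multiset.mem_range.mp hx)
    have P3 : (Multiset.range b).map
          (fun x => ({v (a + (ℓ + x)), v (a + (ℓ + x) + 1)} : Multiset S))
        = (Multiset.range b).map (fun j => ({c j, c (j + 1)} : Multiset S)) := by
      refine Multiset.map_congr rfl fun x hx => ?_
      rw [show a + (ℓ + x) = a + ℓ + x by omega]
      exact hE3 x (Multiset.mem_range.mp hx)
    have P4 : (Multiset.range ℓ).map
          (fun x => ({v (a + (ℓ + (b + x))), v (a + (ℓ + (b + x)) + 1)} : Multiset S))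
        = (Multiset.range ℓ).map (fun j => ({p j, p (j + 1)} : Multiset S)) := by
      have step : (Multiset.range ℓ).map
            (fun x => ({v (a + (ℓ + (b + x))), v (a + (ℓ + (b + x)) + 1)} : Multiset S))
          = (Multiset.range ℓ).map
            ((fun j => ({p j, p (j + 1)} : Multiset S)) ∘ fun j => ℓ - 1 - j) := by
        refine Multiset.map_congr rfl fun x hx => ?_
        rw [show a + (ℓ + (b + x)) = a + ℓ + b + x by omega]
        exact hE4 x (Multiset.mem_range.mp hx)
      rw [step, ← Multiset.map_map, Stmt16.range_reflect]
    rw [P1, P2, P3, P4, two_nsmul]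
    ac_rfl
end

section
/- Let v ∈ ℝ^{k−1} and let u_1, ..., u_k ∈ ℝ^{k−1} be vectors (rays emanating from v) such that for each i, the reflection −u_i lies in the convex cone generated by {u_j : j ≠ i}. Then the closed cones K_i = v + cone({u_j : j ≠ i}) cover ℝ^{k−1}: every point of ℝ^{k−1} lies in some K_i, provided u_1, ..., u_k positively span ℝ^{k−1}. -/
/-- if rays `u₁, …, u_k` from a point `v` of ℝ^(k-1) are such that
each `-uᵢ` lies in the cone generated by the other rays, and the rays positively
span ℝ^(k-1), then the cones `K_i = v + cone {u_j : j ≠ i}` cover ℝ^(k-1). -/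
theorem stmt_19 (k : ℕ) (hk : 2 ≤ k)
    (v : Fin (k - 1) → ℝ) (u : Fin k → (Fin (k - 1) → ℝ))
    (hrefl : ∀ i : Fin k, ∃ c : Fin k → ℝ,
      (∀ j, 0 ≤ c j) ∧ c i = 0 ∧ -u i = ∑ j, c j • u j)
    (hspan : ∀ x : Fin (k - 1) → ℝ, ∃ c : Fin k → ℝ,
      (∀ j, 0 ≤ c j) ∧ x = ∑ j, c j • u j) :
    ∀ x : Fin (k - 1) → ℝ, ∃ (i : Fin k) (c : Fin k → ℝ),
      (∀ j, 0 ≤ c j) ∧ c i = 0 ∧ x = v + ∑ j, c j • u j := by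
  intro x
  have hkpos : 0 < k := by omega
  set i : Fin k := ⟨0, hkpos⟩ with hi
  obtain ⟨d, hd0, hdi, hdeq⟩ := hrefl i
  obtain ⟨c, hc0, hceq⟩ := hspan (x - v)
  -- e is a nonnegative vector with e i = 1 and ∑ e j • u j = 0
  set e : Fin k → ℝ := fun j => d j + (if j = i then 1 else 0) with he
  have he0 : ∀ j, 0 ≤ e j := by
    intro j
    have := hd0 j
    simp only [he]
    split <;> linarith
  have hei : e i = 1 := by simp [he, hdi]
  have hesum : ∑ j, e j • u j = 0 := by
    have h1 : ∑ j, e j • u j = (∑ j, d j • u j) + ∑ j, (if j = i then (1:ℝ) else 0) • u j := by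
      rw [← Finset.sum_add_distrib]
      apply Finset.sum_congr rfl
      intro j _
      simp [he, add_smul]
    have h2 : ∑ j, (if j = i then (1:ℝ) else 0) • u j = u i := by
      rw [Finset.sum_eq_single i]
      · simp
      · intro b _ hb; simp [hb]
      · simp
    rw [h1, h2, ← hdeq]
    simp
  -- minimize c j / e j over j with e j > 0
  set S : Finset (Fin k) := Finset.univ.filter (fun j => 0 < e j) with hS
  have hSne : S.Nonempty := ⟨i, by simp [hS, hei]⟩
  obtain ⟨j₀, hj₀S, hj₀min⟩ := S.exists_min_image (fun j => c j / e j) hSne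
  have hej₀ : 0 < e j₀ := by
    have := hj₀S; simp [hS] at this; exact this
  set t : ℝ := c j₀ / e j₀ with ht
  have ht0 : 0 ≤ t := div_nonneg (hc0 j₀) hej₀.le
  refine ⟨j₀, fun j => c j - t * e j, ?_, ?_, ?_⟩
  · intro j
    show 0 ≤ c j - t * e j
    rcases lt_or_eq_of_le (he0 j) with hpos | hzero
    · have hjS : j ∈ S := by simp [hS, hpos]
      have h := hj₀min j hjS
      rw [div_le_div_iff₀ hej₀ hpos] at h
      have h2 : t * e j ≤ c j := by
        rw [ht, div_mul_eq_mul_div, div_le_iff₀ hej₀]; linarith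
      linarith
    · rw [← hzero, mul_zero, sub_zero]; exact hc0 j
  · show c j₀ - t * e j₀ = 0
    rw [ht]; field_simp; ring
  · have h1 : ∑ j, (c j - t * e j) • u j
        = (∑ j, c j • u j) - t • ∑ j, e j • u j := by
      rw [Finset.smul_sum, ← Finset.sum_sub_distrib]
      apply Finset.sum_congr rfl
      intro j _
      rw [sub_smul, smul_smul]
    rw [h1, hesum, smul_zero, sub_zero, ← hceq]
    abel
end
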